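/- Let D and C be stably embedded, orthogonal (every definable subset of D^m × C^n is a finite union of rectangles Y × Z with Y ⊆ D^m, Z ⊆ C^n definable) definable sets such that both D and C, with their induced structures, weakly eliminate imaginaries. Then D ∪ C weakly eliminates imaginaries: every definable X ⊆ D^m × C^n is definable over D(acl^eq(⌜X⌝)) ∪ C(acl^eq(⌜X⌝)). -/

import Mathlib

open FirstOrder Cardinal

namespace WeakEIOrth

variable (L : FirstOrder.Language.{0, 0}) (M : Type) [L.Structure M]

/-- `X` is definable with the parameter tuple `a`. -/
def DefWith {α : Type} {k : ℕ} (a : Fin k → M) (X : Set (α → M)) : Prop :=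
  ∃ φ : L.Formula (α ⊕ Fin k), X = {x | φ.Realize (Sum.elim x a)}

/-- `X` is definable (with some parameters). -/
def IsDef {α : Type} (X : Set (α → M)) : Prop :=
  ∃ (k : ℕ) (a : Fin k → M), DefWith L M a X

/-- The automorphism `σ` stabilizes the set `X` of tuples setwise (i.e. `σ` fixes the
code `⌜X⌝`). -/
def FixesSet {α : Type} (σ : L.Equiv M M) (X : Set (α → M)) : Prop :=
  ∀ x : α → M, x ∈ X ↔ (⇑σ ∘ x) ∈ X

/-- `X` is definable over `S`-points of `acl^eq(⌜X⌝)`: there is a tuple `a` from `S`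
over which `X` is definable and whose orbit under the automorphisms stabilizing `X`
setwise is finite. -/
def WeakCoded {α : Type} (X : Set (α → M)) (S : Set M) : Prop :=
  ∃ (k : ℕ) (a : Fin k → M), (∀ i, a i ∈ S) ∧ DefWith L M a X ∧
    Set.Finite {b : Fin k → M | ∃ σ : L.Equiv M M, FixesSet L M σ X ∧ b = ⇑σ ∘ a}

/-- `M` is saturated (in its own cardinality). -/
def IsSaturatedStruct : Prop :=
  ∀ A : Set M, #A < #M →
    ∀ p : Set (Σ m : ℕ, L.Formula (Fin (m + 1)) × (Fin m → M)),
      (∀ q ∈ p, ∀ i, q.2.2 i ∈ A) →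
      (∀ s : Finset (Σ m : ℕ, L.Formula (Fin (m + 1)) × (Fin m → M)), ↑s ⊆ p →
        ∃ x : M, ∀ q ∈ s, q.2.1.Realize (Fin.cons x q.2.2)) →
      ∃ x : M, ∀ q ∈ p, q.2.1.Realize (Fin.cons x q.2.2)

/-- `M` is strongly homogeneous (in its own cardinality): every partial elementary map
with small domain extends to an automorphism. -/
def IsStronglyHomog : Prop :=
  ∀ (A : Set M) (f : M → M), #A < #M →
    (∀ (n : ℕ) (a : Fin n → M), (∀ i, a i ∈ A) →
      ∀ φ : L.Formula (Fin n), φ.Realize a ↔ φ.Realize (f ∘ a)) →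
    ∃ σ : L.Equiv M M, ∀ x ∈ A, σ x = f x

section Helpers

variable {L M}
variable {γ δ : Type} {m n : ℕ}

/-- Image of a set of tuples under an automorphism. -/
def smul (σ : L.Equiv M M) (S : Set (γ → M)) : Set (γ → M) :=
  {y | (⇑σ.symm ∘ y) ∈ S}

lemma symm_comp_comp (σ : L.Equiv M M) (y : γ → M) : ⇑σ.symm ∘ (⇑σ ∘ y) = y := by
  funext i; simp

lemma comp_symm_comp (σ : L.Equiv M M) (y : γ → M) : ⇑σ ∘ (⇑σ.symm ∘ y) = y := by
  funext i; simp

lemma mem_smul_comp (σ : L.Equiv M M) (S : Set (γ → M)) (x : γ → M) :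
    (⇑σ ∘ x) ∈ smul σ S ↔ x ∈ S := by
  show ⇑σ.symm ∘ (⇑σ ∘ x) ∈ S ↔ x ∈ S
  rw [symm_comp_comp]

lemma smul_symm_smul (σ : L.Equiv M M) (S : Set (γ → M)) : smul σ.symm (smul σ S) = S := by
  ext y
  show ⇑σ.symm.symm ∘ y ∈ smul σ S ↔ y ∈ S
  rw [Language.Equiv.symm_symm]
  show ⇑σ.symm ∘ (⇑σ ∘ y) ∈ S ↔ y ∈ S
  rw [symm_comp_comp]

lemma fixes_of_smul_eq {σ σ₀ : L.Equiv M M} {S : Set (γ → M)} (h : smul σ S = smul σ₀ S) :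
    FixesSet L M (σ₀.symm.comp σ) S := by
  intro x
  have h1 : x ∈ S ↔ (⇑σ ∘ x) ∈ smul σ S := (mem_smul_comp σ S x).symm
  rw [h] at h1
  have h3 : ⇑(σ₀.symm.comp σ) ∘ x = ⇑σ₀.symm ∘ (⇑σ ∘ x) := by
    funext i; simp
  rw [h3]; exact h1

lemma fixes_symm {σ : L.Equiv M M} {S : Set (γ → M)} (h : FixesSet L M σ S) :
    FixesSet L M σ.symm S := by
  intro x
  have h2 := h (⇑σ.symm ∘ x)
  rw [comp_symm_comp] at h2
  exact h2.symm

/-- The fiber of `X` over `z`. -/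
def fib (X : Set ((Fin m ⊕ Fin n) → M)) (z : Fin n → M) : Set (Fin m → M) :=
  {y | Sum.elim y z ∈ X}

lemma comp_elim (σ : L.Equiv M M) (y : Fin m → M) (z : Fin n → M) :
    ⇑σ ∘ Sum.elim y z = Sum.elim (⇑σ ∘ y) (⇑σ ∘ z) := by
  funext x; cases x <;> rfl

lemma smul_fib {X : Set ((Fin m ⊕ Fin n) → M)} {σ : L.Equiv M M}
    (hσ : FixesSet L M σ X) (z : Fin n → M) :
    smul σ (fib X z) = fib X (⇑σ ∘ z) := by
  ext y
  show Sum.elim (⇑σ.symm ∘ y) z ∈ X ↔ Sum.elim y (⇑σ ∘ z) ∈ X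
  rw [hσ (Sum.elim (⇑σ.symm ∘ y) z), comp_elim, comp_symm_comp]

/-- The set of `z`'s whose fiber is exactly `S`. -/
def fibClass (X : Set ((Fin m ⊕ Fin n) → M)) (S : Set (Fin m → M)) : Set (Fin n → M) :=
  {z | fib X z = S}

lemma smul_fibClass {X : Set ((Fin m ⊕ Fin n) → M)} {σ : L.Equiv M M}
    (hσ : FixesSet L M σ X) (S : Set (Fin m → M)) :
    smul σ (fibClass X S) = fibClass X (smul σ S) := by
  ext z
  show fib X (⇑σ.symm ∘ z) = S ↔ fib X z = smul σ S
  constructor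
  · intro h
    have h2 := smul_fib hσ (⇑σ.symm ∘ z)
    rw [h, comp_symm_comp] at h2
    exact h2.symm
  · intro h
    have h2 := smul_fib (fixes_symm hσ) z
    rw [h] at h2
    rw [← h2, smul_symm_smul]

lemma orbit_finite_aux {α : Type} (X : Set (α → M)) (T : Set (δ → M))
    (Fam : Set (Set (δ → M))) (hFam : Fam.Finite)
    (hmap : ∀ σ : L.Equiv M M, FixesSet L M σ X → smul σ T ∈ Fam)
    {k : ℕ} (a : Fin k → M)
    (hfin : Set.Finite {c : Fin k → M | ∃ ρ : L.Equiv M M, FixesSet L M ρ T ∧ c = ⇑ρ ∘ a}) :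
    Set.Finite {c : Fin k → M | ∃ σ : L.Equiv M M, FixesSet L M σ X ∧ c = ⇑σ ∘ a} := by
  have hsub : {c : Fin k → M | ∃ σ : L.Equiv M M, FixesSet L M σ X ∧ c = ⇑σ ∘ a} ⊆
      ⋃ U ∈ Fam, {c : Fin k → M | ∃ σ : L.Equiv M M, smul σ T = U ∧ c = ⇑σ ∘ a} := by
    rintro c ⟨σ, hσ, rfl⟩
    exact Set.mem_biUnion (hmap σ hσ) ⟨σ, rfl, rfl⟩
  refine Set.Finite.subset (Set.Finite.biUnion hFam fun U _ => ?_) hsub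
  by_cases hU : ∃ σ₀ : L.Equiv M M, smul σ₀ T = U
  · obtain ⟨σ₀, hσ₀⟩ := hU
    refine Set.Finite.subset (hfin.image (fun c => ⇑σ₀ ∘ c)) ?_
    rintro c ⟨σ, hσT, rfl⟩
    refine ⟨⇑(σ₀.symm.comp σ) ∘ a,
      ⟨σ₀.symm.comp σ, fixes_of_smul_eq (by rw [hσT, hσ₀]), rfl⟩, ?_⟩
    funext i; simp
  · refine Set.Finite.subset Set.finite_empty ?_
    rintro c ⟨σ, hσT, rfl⟩
    exact absurd ⟨σ, hσT⟩ hU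

lemma defWith_relabel {α β : Type} {k' : ℕ} (e : β ≃ Fin k') (φ : L.Formula (α ⊕ β))
    (b : β → M) :
    DefWith L M (b ∘ ⇑e.symm) {x : α → M | φ.Realize (Sum.elim x b)} := by
  refine ⟨φ.relabel (Sum.map id ⇑e), ?_⟩
  ext x
  simp only [Set.mem_setOf_eq, Language.Formula.realize_relabel]
  have h : (Sum.elim x (b ∘ ⇑e.symm)) ∘ Sum.map id ⇑e = Sum.elim x b := by
    funext i; cases i <;> simp
  rw [h]

lemma isDef_fib {X : Set ((Fin m ⊕ Fin n) → M)} (hX : IsDef L M X) (z : Fin n → M) :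
    IsDef L M (fib X z) := by
  classical
  obtain ⟨k, a, φ, hφ⟩ := hX
  let g : (Fin m ⊕ Fin n) ⊕ Fin k → Fin m ⊕ (Fin n ⊕ Fin k) :=
    Sum.elim (Sum.map id Sum.inl) (fun i => Sum.inr (Sum.inr i))
  have key : fib X z = {y : Fin m → M |
      (φ.relabel g).Realize (Sum.elim y (Sum.elim z a))} := by
    ext y
    show Sum.elim y z ∈ X ↔ _
    rw [hφ]
    simp only [Set.mem_setOf_eq, Language.Formula.realize_relabel]
    have h : (Sum.elim y (Sum.elim z a)) ∘ g = Sum.elim (Sum.elim y z) a := by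
      funext i; rcases i with (i | i) | i <;> rfl
    rw [h]
  exact ⟨n + k, Sum.elim z a ∘ ⇑finSumFinEquiv.symm,
    key ▸ defWith_relabel finSumFinEquiv (φ.relabel g) (Sum.elim z a)⟩

lemma isDef_fibClass {X : Set ((Fin m ⊕ Fin n) → M)} (hX : IsDef L M X)
    {S : Set (Fin m → M)} (hS : IsDef L M S) : IsDef L M (fibClass X S) := by
  classical
  obtain ⟨k, a, φ, hφ⟩ := hX
  obtain ⟨kS, aS, ψ, hψ⟩ := hS
  let A : Type := Fin n ⊕ (Fin k ⊕ Fin kS)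
  let g1 : (Fin m ⊕ Fin n) ⊕ Fin k → A ⊕ Fin m :=
    Sum.elim (Sum.elim (fun i => Sum.inr i) (fun j => Sum.inl (Sum.inl j)))
      (fun i => Sum.inl (Sum.inr (Sum.inl i)))
  let g2 : Fin m ⊕ Fin kS → A ⊕ Fin m :=
    Sum.elim Sum.inr (fun i => Sum.inl (Sum.inr (Sum.inr i)))
  let χ : L.Formula A := ((φ.relabel g1).iff (ψ.relabel g2)).iAlls (Fin m)
  have key : fibClass X S = {z : Fin n → M |
      χ.Realize (Sum.elim z (Sum.elim a aS))} := by
    ext z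
    show fib X z = S ↔ _
    rw [Set.mem_setOf_eq]
    rw [show χ = ((φ.relabel g1).iff (ψ.relabel g2)).iAlls (Fin m) from rfl]
    rw [Language.Formula.realize_iAlls]
    rw [Set.ext_iff]
    refine forall_congr' fun y => ?_
    have hinner : (fun (i : A ⊕ Fin m) => Sum.elim (Sum.elim z (Sum.elim a aS)) y i) =
        Sum.elim (Sum.elim z (Sum.elim a aS)) y := by funext i; simp
    rw [hinner, Language.Formula.realize_iff,
      Language.Formula.realize_relabel, Language.Formula.realize_relabel]
    have h1 : (Sum.elim (Sum.elim z (Sum.elim a aS)) y) ∘ g1 = Sum.elim (Sum.elim y z) a := by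
      funext i; rcases i with (i | i) | i <;> rfl
    have h2 : (Sum.elim (Sum.elim z (Sum.elim a aS)) y) ∘ g2 = Sum.elim y aS := by
      funext i; rcases i with i | i <;> rfl
    rw [h1, h2]
    have hy1 : y ∈ fib X z ↔ φ.Realize (Sum.elim (Sum.elim y z) a) := by
      show Sum.elim y z ∈ X ↔ _
      rw [hφ]; rfl
    have hy2 : y ∈ S ↔ ψ.Realize (Sum.elim y aS) := by rw [hψ]; rfl
    rw [← hy1, ← hy2]
  exact ⟨k + kS, Sum.elim a aS ∘ ⇑finSumFinEquiv.symm,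
    key ▸ defWith_relabel finSumFinEquiv χ (Sum.elim a aS)⟩

lemma fibs_finite {N : ℕ} (Y : Fin N → Set (Fin m → M)) (Z : Fin N → Set (Fin n → M))
    (X : Set ((Fin m ⊕ Fin n) → M))
    (hX : X = {w | ∃ i, (w ∘ Sum.inl) ∈ Y i ∧ (w ∘ Sum.inr) ∈ Z i}) :
    Set.Finite {S : Set (Fin m → M) | ∃ z : Fin n → M, fib X z = S} := by
  have hsub : {S : Set (Fin m → M) | ∃ z : Fin n → M, fib X z = S} ⊆
      Set.range (fun s : Set (Fin N) => {y : Fin m → M | ∃ i ∈ s, y ∈ Y i}) := by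
    rintro S ⟨z, rfl⟩
    refine ⟨{i | z ∈ Z i}, ?_⟩
    ext y
    show (∃ i, z ∈ Z i ∧ y ∈ Y i) ↔ Sum.elim y z ∈ X
    rw [hX]
    simp only [Set.mem_setOf_eq, Sum.elim_comp_inl, Sum.elim_comp_inr]
    tauto
  exact Set.Finite.subset (Set.finite_range _) hsub

/-- Finite disjunction of a list of formulas. -/
def orFormulas {α : Type} : List (L.Formula α) → L.Formula α
  | [] => ⊥
  | φ :: l => φ ⊔ orFormulas l

lemma realize_orFormulas {α : Type} (l : List (L.Formula α)) (v : α → M) :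
    (orFormulas l).Realize v ↔ ∃ φ ∈ l, φ.Realize v := by
  induction l with
  | nil => simp [orFormulas]
  | cons φ l ih =>
    simp only [orFormulas, Language.Formula.realize_sup, ih, List.mem_cons]
    constructor
    · rintro (h | ⟨ψ, hψ, h⟩)
      · exact ⟨φ, Or.inl rfl, h⟩
      · exact ⟨ψ, Or.inr hψ, h⟩
    · rintro ⟨ψ, (rfl | hψ), h⟩
      · exact Or.inl h
      · exact Or.inr ⟨ψ, hψ, h⟩

end Helpers

/-- Weak elimination of imaginaries for a union of two orthogonal stably embedded
sets (working in a monster model `M`): if `D` and `C` are stably embedded and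
orthogonal, and both `D` and `C` (with their induced structures) weakly eliminate
imaginaries, then `D ∪ C` weakly eliminates imaginaries — every definable
`X ⊆ D^m × C^n` is definable over `D(acl^eq ⌜X⌝) ∪ C(acl^eq ⌜X⌝)`. -/
theorem weak_EI_union_orthogonal (D C : Set M)
    (hsat : IsSaturatedStruct L M) (hhom : IsStronglyHomog L M)
    (hcard : ℵ₀ + L.card < #M)
    -- `D` is stably embedded
    (hDse : ∀ (m : ℕ) (X : Set (Fin m → M)), IsDef L M X → (∀ x ∈ X, ∀ i, x i ∈ D) →
      ∃ (k : ℕ) (a : Fin k → M), (∀ i, a i ∈ D) ∧ DefWith L M a X)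
    -- `C` is stably embedded
    (hCse : ∀ (m : ℕ) (X : Set (Fin m → M)), IsDef L M X → (∀ x ∈ X, ∀ i, x i ∈ C) →
      ∃ (k : ℕ) (a : Fin k → M), (∀ i, a i ∈ C) ∧ DefWith L M a X)
    -- `D` and `C` are orthogonal: every definable subset of `D^m × C^n` is a finite
    -- union of rectangles
    (horth : ∀ (m n : ℕ) (X : Set ((Fin m ⊕ Fin n) → M)), IsDef L M X →
      (∀ w ∈ X, (∀ i, w (Sum.inl i) ∈ D) ∧ (∀ j, w (Sum.inr j) ∈ C)) →
      ∃ (N : ℕ) (Y : Fin N → Set (Fin m → M)) (Z : Fin N → Set (Fin n → M)),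
        (∀ i, IsDef L M (Y i) ∧ IsDef L M (Z i) ∧
          (∀ y ∈ Y i, ∀ j, y j ∈ D) ∧ (∀ z ∈ Z i, ∀ j, z j ∈ C)) ∧
        X = {w | ∃ i, (w ∘ Sum.inl) ∈ Y i ∧ (w ∘ Sum.inr) ∈ Z i})
    -- `D` weakly eliminates imaginaries
    (hDwei : ∀ (m : ℕ) (X : Set (Fin m → M)), IsDef L M X → (∀ x ∈ X, ∀ i, x i ∈ D) →
      WeakCoded L M X D)
    -- `C` weakly eliminates imaginaries
    (hCwei : ∀ (m : ℕ) (X : Set (Fin m → M)), IsDef L M X → (∀ x ∈ X, ∀ i, x i ∈ C) →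
      WeakCoded L M X C) :
    ∀ (m n : ℕ) (X : Set ((Fin m ⊕ Fin n) → M)), IsDef L M X →
      (∀ w ∈ X, (∀ i, w (Sum.inl i) ∈ D) ∧ (∀ j, w (Sum.inr j) ∈ C)) →
      WeakCoded L M X (D ∪ C) := by
  intro m n X hXdef hXsub
  classical
  obtain ⟨N, Y, Z, _, hXeq⟩ := horth m n X hXdef hXsub
  set Fibs : Set (Set (Fin m → M)) := {S | S.Nonempty ∧ ∃ z, fib X z = S} with hFibsDef
  have hFibsFin : Fibs.Finite :=
    (fibs_finite Y Z X hXeq).subset (fun S hS => hS.2)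
  set Js : Finset (Set (Fin m → M)) := hFibsFin.toFinset with hJsDef
  have hmemJ : ∀ S : ↥Js, (S : Set (Fin m → M)).Nonempty ∧
      ∃ z, fib X z = (S : Set (Fin m → M)) := fun S => hFibsFin.mem_toFinset.1 S.2
  have hmemFibs : ∀ S : ↥Js, (S : Set (Fin m → M)) ∈ Fibs := fun S =>
    hFibsFin.mem_toFinset.1 S.2
  -- fibers stay in Fibs under automorphisms fixing X
  have hsmulFib : ∀ σ : L.Equiv M M, FixesSet L M σ X →
      ∀ S ∈ Fibs, smul σ S ∈ Fibs := by
    rintro σ hσ S ⟨⟨x, hx⟩, z, hz⟩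
    refine ⟨⟨⇑σ ∘ x, (mem_smul_comp σ S x).2 hx⟩, ⇑σ ∘ z, ?_⟩
    rw [← smul_fib hσ z, hz]
  -- D-data for each fiber
  have hD' : ∀ S : ↥Js, ∃ (k : ℕ) (a : Fin k → M), (∀ i, a i ∈ D) ∧
      DefWith L M a (S : Set (Fin m → M)) ∧
      Set.Finite {b : Fin k → M | ∃ σ : L.Equiv M M,
        FixesSet L M σ (S : Set (Fin m → M)) ∧ b = ⇑σ ∘ a} := by
    intro S
    obtain ⟨⟨x0, hx0⟩, z, hz⟩ := hmemJ S
    refine hDwei m S ?_ ?_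
    · rw [← hz]; exact isDef_fib hXdef z
    · intro x hx i
      rw [← hz] at hx
      exact (hXsub _ hx).1 i
  choose kD aD haD hdefD hfinD using hD'
  -- C-data for each fiber class
  have hC' : ∀ S : ↥Js, ∃ (k : ℕ) (a : Fin k → M), (∀ i, a i ∈ C) ∧
      DefWith L M a (fibClass X (S : Set (Fin m → M))) ∧
      Set.Finite {b : Fin k → M | ∃ σ : L.Equiv M M,
        FixesSet L M σ (fibClass X (S : Set (Fin m → M))) ∧ b = ⇑σ ∘ a} := by
    intro S
    obtain ⟨⟨x0, hx0⟩, z, hz⟩ := hmemJ S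
    refine hCwei n (fibClass X (S : Set (Fin m → M)))
      (isDef_fibClass hXdef ⟨kD S, aD S, hdefD S⟩) ?_
    intro z' hz' j
    have hx0' : Sum.elim x0 z' ∈ X := by
      have : x0 ∈ fib X z' := by rw [hz']; exact hx0
      exact this
    exact (hXsub _ hx0').2 j
  choose kC bC hbC hdefC hfinC using hC'
  -- decomposition of X
  have hXdecomp : ∀ w, w ∈ X ↔ ∃ S : ↥Js,
      (w ∘ Sum.inl) ∈ (S : Set (Fin m → M)) ∧
      (w ∘ Sum.inr) ∈ fibClass X (S : Set (Fin m → M)) := by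
    intro w
    constructor
    · intro hw
      have hw' : Sum.elim (w ∘ Sum.inl) (w ∘ Sum.inr) ∈ X := by
        rw [Sum.elim_comp_inl_inr]; exact hw
      have hmem : fib X (w ∘ Sum.inr) ∈ Fibs := ⟨⟨w ∘ Sum.inl, hw'⟩, _, rfl⟩
      exact ⟨⟨_, hFibsFin.mem_toFinset.2 hmem⟩, hw', rfl⟩
    · rintro ⟨S, h1, h2⟩
      have h3 : (w ∘ Sum.inl) ∈ fib X (w ∘ Sum.inr) := by
        rw [show fib X (w ∘ Sum.inr) = (S : Set (Fin m → M)) from h2]; exact h1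
      have h4 : Sum.elim (w ∘ Sum.inl) (w ∘ Sum.inr) ∈ X := h3
      rwa [Sum.elim_comp_inl_inr] at h4
  -- choose defining formulas
  have hdefD' : ∀ S : ↥Js, ∃ φ : L.Formula (Fin m ⊕ Fin (kD S)),
      (S : Set (Fin m → M)) = {x | φ.Realize (Sum.elim x (aD S))} := hdefD
  choose φD hφD using hdefD'
  have hdefC' : ∀ S : ↥Js, ∃ φ : L.Formula (Fin n ⊕ Fin (kC S)),
      fibClass X (S : Set (Fin m → M)) = {x | φ.Realize (Sum.elim x (bC S))} := hdefC
  choose φC hφC using hdefC'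
  -- assemble
  let ι : Type := (Σ S : ↥Js, Fin (kD S)) ⊕ (Σ S : ↥Js, Fin (kC S))
  let A : ι → M := Sum.elim (fun p => aD p.1 p.2) (fun p => bC p.1 p.2)
  let Φ : ↥Js → L.Formula ((Fin m ⊕ Fin n) ⊕ ι) := fun S =>
    ((φD S).relabel (Sum.elim (fun i => Sum.inl (Sum.inl i))
        (fun j => Sum.inr (Sum.inl ⟨S, j⟩)))) ⊓
    ((φC S).relabel (Sum.elim (fun i => Sum.inl (Sum.inr i))
        (fun j => Sum.inr (Sum.inr ⟨S, j⟩))))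
  let θ : L.Formula ((Fin m ⊕ Fin n) ⊕ ι) :=
    orFormulas ((Finset.univ : Finset ↥Js).toList.map Φ)
  have hθ : X = {w | θ.Realize (Sum.elim w A)} := by
    ext w
    rw [Set.mem_setOf_eq, show θ = orFormulas ((Finset.univ : Finset ↥Js).toList.map Φ)
      from rfl, realize_orFormulas, hXdecomp w]
    constructor
    · rintro ⟨S, h1, h2⟩
      refine ⟨Φ S, List.mem_map.2 ⟨S, by simp, rfl⟩, ?_⟩
      rw [show Φ S = _ ⊓ _ from rfl, Language.Formula.realize_inf,
        Language.Formula.realize_relabel, Language.Formula.realize_relabel]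
      have e1 : (Sum.elim w A) ∘ (Sum.elim (fun i => Sum.inl (Sum.inl i))
          (fun j => Sum.inr (Sum.inl ⟨S, j⟩))) = Sum.elim (w ∘ Sum.inl) (aD S) := by
        funext i; rcases i with i | i <;> rfl
      have e2 : (Sum.elim w A) ∘ (Sum.elim (fun i => Sum.inl (Sum.inr i))
          (fun j => Sum.inr (Sum.inr ⟨S, j⟩))) = Sum.elim (w ∘ Sum.inr) (bC S) := by
        funext i; rcases i with i | i <;> rfl
      rw [e1, e2]
      constructor
      · have := h1; rw [hφD S] at this; exact this
      · have := h2; rw [hφC S] at this; exact this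
    · rintro ⟨ψ, hψ, hreal⟩
      obtain ⟨S, _, rfl⟩ := List.mem_map.1 hψ
      rw [show Φ S = _ ⊓ _ from rfl, Language.Formula.realize_inf,
        Language.Formula.realize_relabel, Language.Formula.realize_relabel] at hreal
      have e1 : (Sum.elim w A) ∘ (Sum.elim (fun i => Sum.inl (Sum.inl i))
          (fun j => Sum.inr (Sum.inl ⟨S, j⟩))) = Sum.elim (w ∘ Sum.inl) (aD S) := by
        funext i; rcases i with i | i <;> rfl
      have e2 : (Sum.elim w A) ∘ (Sum.elim (fun i => Sum.inl (Sum.inr i))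
          (fun j => Sum.inr (Sum.inr ⟨S, j⟩))) = Sum.elim (w ∘ Sum.inr) (bC S) := by
        funext i; rcases i with i | i <;> rfl
      rw [e1, e2] at hreal
      refine ⟨S, ?_, ?_⟩
      · rw [hφD S]; exact hreal.1
      · rw [hφC S]; exact hreal.2
  let K : ℕ := Fintype.card ι
  let e : ι ≃ Fin K := Fintype.equivFin ι
  refine ⟨K, A ∘ ⇑e.symm, ?_, ?_, ?_⟩
  · have hall : ∀ x : ι, A x ∈ D ∪ C := by
      rintro (⟨S, j⟩ | ⟨S, j⟩)
      · exact Or.inl (haD S j)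
      · exact Or.inr (hbC S j)
    exact fun i => hall _
  · rw [hθ]; exact defWith_relabel e θ A
  · -- finiteness of the orbit
    have hOD : ∀ S : ↥Js, Set.Finite {c : Fin (kD S) → M |
        ∃ σ : L.Equiv M M, FixesSet L M σ X ∧ c = ⇑σ ∘ aD S} := by
      intro S
      refine orbit_finite_aux X (S : Set (Fin m → M)) Fibs hFibsFin ?_ (aD S) (hfinD S)
      intro σ hσ
      exact hsmulFib σ hσ _ (hmemFibs S)
    have hOC : ∀ S : ↥Js, Set.Finite {c : Fin (kC S) → M |
        ∃ σ : L.Equiv M M, FixesSet L M σ X ∧ c = ⇑σ ∘ bC S} := by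
      intro S
      refine orbit_finite_aux X (fibClass X (S : Set (Fin m → M)))
        (fibClass X '' Fibs) (hFibsFin.image _) ?_ (bC S) (hfinC S)
      intro σ hσ
      rw [smul_fibClass hσ]
      exact ⟨smul σ S, hsmulFib σ hσ _ (hmemFibs S), rfl⟩
    have hOrb' : Set.Finite {b : ι → M |
        ∃ σ : L.Equiv M M, FixesSet L M σ X ∧ b = ⇑σ ∘ A} := by
      let V : ι → Set M := fun x => Sum.elim
        (fun p : Σ S : ↥Js, Fin (kD S) => (fun c : Fin (kD p.1) → M => c p.2) ''
          {c | ∃ σ : L.Equiv M M, FixesSet L M σ X ∧ c = ⇑σ ∘ aD p.1})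
        (fun p : Σ S : ↥Js, Fin (kC S) => (fun c : Fin (kC p.1) → M => c p.2) ''
          {c | ∃ σ : L.Equiv M M, FixesSet L M σ X ∧ c = ⇑σ ∘ bC p.1}) x
      have hVfin : ∀ x : ι, (V x).Finite := by
        rintro (p | p)
        · exact (hOD p.1).image _
        · exact (hOC p.1).image _
      refine Set.Finite.subset (Set.Finite.pi hVfin) ?_
      rintro b ⟨σ, hσ, rfl⟩ x _
      rcases x with p | p
      · exact ⟨⇑σ ∘ aD p.1, ⟨σ, hσ, rfl⟩, rfl⟩
      · exact ⟨⇑σ ∘ bC p.1, ⟨σ, hσ, rfl⟩, rfl⟩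
    refine Set.Finite.subset (hOrb'.image (fun b => b ∘ ⇑e.symm)) ?_
    rintro b ⟨σ, hσ, rfl⟩
    exact ⟨⇑σ ∘ A, ⟨σ, hσ, rfl⟩, rfl⟩


end WeakEIOrth
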